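/- Let V be a finite-dimensional vector space over a field of characteristic 0, W a finite increasing filtration on V, N : V → V nilpotent preserving W, and let 𝒲 be the relative monodromy filtration of N with respect to W. Then for any N' : V → V commuting with N and preserving W (i.e. N'(W_w) ⊆ W_w for all w), exp(N')𝒲 is the relative monodromy filtration of exp(N') N exp(−N') with respect to exp(N')W. In particular, if additionally N' is nilpotent, N' N = N N' and N'(W_w) ⊆ W_w, then exp(N')(𝒲_w) = 𝒲_w for all w. -/

import Mathlib

def IsFiniteFiltration {K V : Type*} [Field K] [AddCommGroup V] [Module K V]
    (W : ℤ → Submodule K V) : Prop :=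
  Monotone W ∧ (∃ a : ℤ, ∀ w : ℤ, w ≤ a → W w = ⊥) ∧ (∃ b : ℤ, ∀ w : ℤ, b ≤ w → W w = ⊤)

def IsRelMonodromy {K V : Type*} [Field K] [AddCommGroup V] [Module K V]
    (N : Module.End K V) (W 𝒲 : ℤ → Submodule K V) : Prop :=
  IsFiniteFiltration 𝒲 ∧
  (∀ w : ℤ, ∀ x ∈ 𝒲 w, N x ∈ 𝒲 (w - 2)) ∧
  (∀ w : ℤ, ∀ r : ℕ,
    (∀ x ∈ 𝒲 (w + r) ⊓ W w,
       (N ^ r) x ∈ (𝒲 (w - r - 1) ⊓ W w) ⊔ W (w - 1) →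
       x ∈ (𝒲 (w + r - 1) ⊓ W w) ⊔ W (w - 1)) ∧
    (∀ y ∈ 𝒲 (w - r) ⊓ W w, ∃ x ∈ 𝒲 (w + r) ⊓ W w,
       y - (N ^ r) x ∈ (𝒲 (w - r - 1) ⊓ W w) ⊔ W (w - 1)))

/-- The exponential of a (nilpotent) endomorphism of a finite-dimensional space:
`∑_{i ≤ finrank V} (1/i!) N^i`, which equals the usual exponential series
for nilpotent `N`. -/
noncomputable def expNil {K V : Type*} [Field K] [AddCommGroup V] [Module K V]
    (N : Module.End K V) : Module.End K V :=
  ∑ i ∈ Finset.range (Module.finrank K V + 1), ((i.factorial : K))⁻¹ • N ^ i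

section ExpAlg

variable {K V : Type*} [Field K] [CharZero K] [AddCommGroup V] [Module K V]
  [FiniteDimensional K V]

omit [CharZero K] in
lemma pow_eq_zero_of_nilp {A : Module.End K V} (h : IsNilpotent A) {m : ℕ}
    (hm : Module.finrank K V ≤ m) : A ^ m = 0 := by
  have h1 : A ^ (Module.finrank K V) = 0 := by
    have h2 := A.aeval_self_charpoly
    rw [h.charpoly_eq_X_pow_finrank] at h2
    simpa using h2
  calc A ^ m = A ^ (Module.finrank K V) * A ^ (m - Module.finrank K V) := by
        rw [← pow_add]; congr 1; omega
    _ = 0 := by rw [h1, zero_mul]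

lemma expNil_mul_expNil_neg {A : Module.End K V} (h : IsNilpotent A) :
    expNil A * expNil (-A) = 1 := by
  classical
  set d := Module.finrank K V with hd
  set n := d + 1 with hn
  have hz : ∀ m : ℕ, d ≤ m → A ^ m = 0 := fun m hm => pow_eq_zero_of_nilp h hm
  have hneg : ∀ j : ℕ, ((j.factorial : K))⁻¹ • (-A) ^ j
      = (((-1 : K)) ^ j * ((j.factorial : K))⁻¹) • A ^ j := by
    intro j
    rw [show (-A) = ((-1 : K) • A) by rw [neg_one_smul], smul_pow, smul_smul, mul_comm]
  unfold expNil
  rw [← hd, ← hn]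
  simp_rw [hneg]
  rw [Finset.sum_mul_sum]
  have hterm : ∀ i j : ℕ, (((i.factorial : K))⁻¹ • A ^ i) *
      ((((-1 : K)) ^ j * ((j.factorial : K))⁻¹) • A ^ j)
      = ((((i.factorial : K))⁻¹ * (((-1 : K)) ^ j * ((j.factorial : K))⁻¹)) • A ^ (i + j)) := by
    intro i j
    rw [smul_mul_smul_comm, pow_add]
  simp_rw [hterm]
  set g : ℕ × ℕ → Module.End K V :=
    fun p => (((p.1.factorial : K))⁻¹ * (((-1 : K)) ^ p.2 * ((p.2.factorial : K))⁻¹)) • A ^ (p.1 + p.2)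
    with hg
  have h1 : ∑ i ∈ Finset.range n, ∑ j ∈ Finset.range n,
      ((((i.factorial : K))⁻¹ * (((-1 : K)) ^ j * ((j.factorial : K))⁻¹)) • A ^ (i + j))
      = ∑ p ∈ Finset.range n ×ˢ Finset.range n, g p := by
    rw [Finset.sum_product]
  rw [h1]
  have h2 : ∑ p ∈ Finset.range n ×ˢ Finset.range n, g p
      = ∑ p ∈ (Finset.range n ×ˢ Finset.range n).filter (fun p => p.1 + p.2 < n), g p := by
    symm
    apply Finset.sum_subset (Finset.filter_subset _ _)
    intro p _ hp
    simp only [Finset.mem_filter, not_and, not_lt] at hp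
    have : A ^ (p.1 + p.2) = 0 := by
      apply hz
      have hge := hp ‹p ∈ Finset.range n ×ˢ Finset.range n›
      omega
    rw [hg]; simp [this]
  rw [h2]
  have h3 : (Finset.range n ×ˢ Finset.range n).filter (fun p => p.1 + p.2 < n)
      = (Finset.range n).biUnion (fun k => Finset.HasAntidiagonal.antidiagonal k) := by
    ext p
    simp only [Finset.mem_filter, Finset.mem_product, Finset.mem_range, Finset.mem_biUnion,
      Finset.HasAntidiagonal.mem_antidiagonal]
    constructor
    · rintro ⟨⟨h1, h2⟩, h3⟩
      exact ⟨p.1 + p.2, h3, rfl⟩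
    · rintro ⟨k, hk, hpk⟩
      omega
  rw [h3, Finset.sum_biUnion]
  · have h4 : ∀ k ∈ Finset.range n, ∑ p ∈ Finset.HasAntidiagonal.antidiagonal k, g p
        = (if k = 0 then (1:K) else 0) • A ^ k := by
      intro k _
      have h5 : ∑ p ∈ Finset.HasAntidiagonal.antidiagonal k, g p
          = (∑ p ∈ Finset.HasAntidiagonal.antidiagonal k,
              (((p.1.factorial : K))⁻¹ * (((-1 : K)) ^ p.2 * ((p.2.factorial : K))⁻¹))) • A ^ k := by
        rw [Finset.sum_smul]
        apply Finset.sum_congr rfl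
        intro p hp
        simp only [hg]
        rw [Finset.HasAntidiagonal.mem_antidiagonal.mp hp]
      rw [h5]
      congr 1
      rw [Finset.Nat.sum_antidiagonal_eq_sum_range_succ_mk]
      have h6 : ∀ i ∈ Finset.range (k+1),
          (((i.factorial : K))⁻¹ * (((-1 : K)) ^ (k - i) * (((k - i).factorial : K))⁻¹))
          = ((k.factorial : K))⁻¹ * ((1:K) ^ i * (-1 : K) ^ (k - i) * (k.choose i : K)) := by
        intro i hi
        have hik : i ≤ k := by simpa using Nat.lt_succ_iff.mp (Finset.mem_range.mp hi)
        have hfact : (k.choose i : K) * (i.factorial : K) * ((k - i).factorial : K)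
            = (k.factorial : K) := by
          rw [← Nat.cast_mul, ← Nat.cast_mul, Nat.choose_mul_factorial_mul_factorial hik]
        have hi0 : (i.factorial : K) ≠ 0 := Nat.cast_ne_zero.mpr (Nat.factorial_ne_zero i)
        have hki0 : ((k - i).factorial : K) ≠ 0 := Nat.cast_ne_zero.mpr (Nat.factorial_ne_zero _)
        have hk0 : (k.factorial : K) ≠ 0 := Nat.cast_ne_zero.mpr (Nat.factorial_ne_zero k)
        field_simp
        rw [← hfact]
        ring
      rw [Finset.sum_congr rfl h6, ← Finset.mul_sum, ← add_pow]
      norm_num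
      rcases Nat.eq_zero_or_pos k with hk | hk
      · subst hk; simp
      · rw [if_neg (by omega), zero_pow (by omega), mul_zero]
    rw [Finset.sum_congr rfl h4]
    simp only [ite_smul, one_smul, zero_smul]
    rw [Finset.sum_ite_eq' (Finset.range n) 0 (fun k => A ^ k)]
    simp [hn]
  · intro a _ b _ hab
    simp only [Finset.disjoint_left, Finset.HasAntidiagonal.mem_antidiagonal]
    rintro p h1 h2
    omega

end ExpAlg


section Lemmas

variable {K V : Type*} [Field K] [AddCommGroup V] [Module K V]

lemma expNil_comm {A N : Module.End K V} (h : A * N = N * A) :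
    expNil A * N = N * expNil A := by
  unfold expNil
  rw [Finset.sum_mul, Finset.mul_sum]
  apply Finset.sum_congr rfl
  intro i _
  rw [smul_mul_assoc, mul_smul_comm]
  congr 1
  exact (Commute.pow_left h i)

lemma pow_mem_of_mem {L : Module.End K V} {p : Submodule K V}
    (hL : ∀ x ∈ p, L x ∈ p) (i : ℕ) : ∀ x ∈ p, (L ^ i) x ∈ p := by
  induction i with
  | zero => intro x hx; simpa using hx
  | succ n ih =>
    intro x hx
    rw [pow_succ', Module.End.mul_apply]
    exact hL _ (ih x hx)

lemma expNil_mem_of_mem {L : Module.End K V} {p : Submodule K V}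
    (hL : ∀ x ∈ p, L x ∈ p) : ∀ x ∈ p, expNil L x ∈ p := by
  intro x hx
  unfold expNil
  rw [LinearMap.sum_apply]
  apply Submodule.sum_mem
  intro i _
  rw [LinearMap.smul_apply]
  exact Submodule.smul_mem _ _ (pow_mem_of_mem hL i x hx)

end Lemmas


section Unique

variable {K V : Type*} [Field K] [AddCommGroup V] [Module K V] {N : Module.End K V}

lemma shift_pow {M : ℤ → Submodule K V}
    (hsh : ∀ w : ℤ, ∀ x ∈ M w, N x ∈ M (w - 2)) :
    ∀ (s : ℕ) (k : ℤ) (x : V), x ∈ M k → (N ^ s) x ∈ M (k - 2 * s) := by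
  intro s
  induction s with
  | zero => intro k x hx; simpa using hx
  | succ m ih =>
    intro k x hx
    have h1 : (N ^ (m + 1)) x = (N ^ m) (N x) := by rw [pow_succ, Module.End.mul_apply]
    rw [h1]
    have h2 := ih (k - 2) (N x) (hsh k x hx)
    have h3 : k - 2 - 2 * (m : ℤ) = k - 2 * ((m + 1 : ℕ) : ℤ) := by push_cast; ring
    rwa [h3] at h2

lemma pow_presW {W : ℤ → Submodule K V}
    (hNW : ∀ w : ℤ, ∀ x ∈ W w, N x ∈ W w) :
    ∀ (s : ℕ) (w : ℤ) (x : V), x ∈ W w → (N ^ s) x ∈ W w := by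
  intro s w
  induction s with
  | zero => intro x hx; simpa using hx
  | succ m ih =>
    intro x hx
    have h1 : (N ^ (m + 1)) x = N ((N ^ m) x) := by rw [pow_succ', Module.End.mul_apply]
    rw [h1]
    exact hNW w _ (ih x hx)

lemma level_drop {W M : ℤ → Submodule K V}
    (hNW : ∀ w : ℤ, ∀ x ∈ W w, N x ∈ W w)
    {a : ℤ} (ha : ∀ w : ℤ, w ≤ a → W w = ⊥)
    (hMmono : Monotone M)
    (hMsh : ∀ w : ℤ, ∀ x ∈ M w, N x ∈ M (w - 2))
    (hMinj : ∀ w : ℤ, ∀ r : ℕ, ∀ x ∈ M (w + r) ⊓ W w,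
       (N ^ r) x ∈ (M (w - r - 1) ⊓ W w) ⊔ W (w - 1) →
       x ∈ (M (w + r - 1) ⊓ W w) ⊔ W (w - 1)) :
    ∀ (v j : ℤ), v ≤ j → ∀ h : V, h ∈ W v → h ∈ M (j + 1) →
      (∀ s : ℕ, (j + 1 - v : ℤ) ≤ s → (N ^ s) h ∈ M (j - 2 * s)) → h ∈ M j := by
  have key : ∀ n : ℕ, ∀ (v j : ℤ), v ≤ a + n → v ≤ j → ∀ h : V, h ∈ W v → h ∈ M (j + 1) →
      (∀ s : ℕ, (j + 1 - v : ℤ) ≤ s → (N ^ s) h ∈ M (j - 2 * s)) → h ∈ M j := by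
    intro n
    induction n with
    | zero =>
      intro v j hva _ h hWv _ _
      have : W v = ⊥ := ha v (by omega)
      rw [this] at hWv
      simp only [Submodule.mem_bot] at hWv
      subst hWv
      exact zero_mem _
    | succ m ih =>
      intro v j hva hvj h hWv hM1 hyp
      by_cases hv : v ≤ a + m
      · exact ih v j hv hvj h hWv hM1 hyp
      -- main step
      set r : ℕ := (j + 1 - v).toNat with hr
      have hrz : (r : ℤ) = j + 1 - v := Int.toNat_of_nonneg (by omega)
      have hmem : h ∈ M (v + r) ⊓ W v := by
        refine Submodule.mem_inf.mpr ⟨?_, hWv⟩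
        rw [show v + (r : ℤ) = j + 1 by omega]
        exact hM1
      have hprem : (N ^ r) h ∈ (M (v - r - 1) ⊓ W v) ⊔ W (v - 1) := by
        apply Submodule.mem_sup_left
        refine Submodule.mem_inf.mpr ⟨?_, pow_presW hNW r v h hWv⟩
        have := hyp r (by omega)
        rwa [show j - 2 * (r : ℤ) = v - r - 1 by omega] at this
      have hc := hMinj v r h hmem hprem
      rw [show v + (r : ℤ) - 1 = j by omega] at hc
      rw [Submodule.mem_sup] at hc
      obtain ⟨p, hp, q, hq, hpq⟩ := hc
      obtain ⟨hpM, hpW⟩ := Submodule.mem_inf.mp hp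
      have hqM : q ∈ M (j + 1) := by
        have : q = h - p := by rw [← hpq]; abel
        rw [this]
        exact Submodule.sub_mem _ hM1 (hMmono (by omega) hpM)
      have hqj : q ∈ M j := by
        apply ih (v - 1) j (by omega) (by omega) q hq hqM
        intro s hs
        have hqhp : (N ^ s) q = (N ^ s) h - (N ^ s) p := by
          have : q = h - p := by rw [← hpq]; abel
          rw [this, map_sub]
        rw [hqhp]
        apply Submodule.sub_mem
        · exact hyp s (by omega)
        · have := shift_pow hMsh s j p hpM
          exact hMmono (by omega) this
      rw [← hpq]
      exact Submodule.add_mem _ hpM hqj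
  intro v j hvj h hWv hM1 hyp
  exact key (v - a).toNat v j (by omega) hvj h hWv hM1 hyp

end Unique

section Unique2

variable {K V : Type*} [Field K] [AddCommGroup V] [Module K V] {N : Module.End K V}

lemma sexact {W M' : ℤ → Submodule K V}
    (hM'mono : Monotone M')
    (hM'sh : ∀ w : ℤ, ∀ x ∈ M' w, N x ∈ M' (w - 2))
    (hM'surj : ∀ w : ℤ, ∀ r : ℕ, ∀ y ∈ M' (w - r) ⊓ W w, ∃ x ∈ M' (w + r) ⊓ W w,
       y - (N ^ r) x ∈ (M' (w - r - 1) ⊓ W w) ⊔ W (w - 1)) :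
    ∀ (w : ℤ) (r : ℕ) (x : V), x ∈ M' (w - r) → x ∈ W w →
      ∃ xh x' l : V, xh ∈ M' (w + r) ⊓ W w ∧ x' ∈ M' (w - r - 1) ⊓ W w ∧
        l ∈ M' (w - r) ⊓ W (w - 1) ∧ x = (N ^ r) xh + x' + l := by
  intro w r x hx hxW
  obtain ⟨xh, hxh, hrest⟩ := hM'surj w r x (Submodule.mem_inf.mpr ⟨hx, hxW⟩)
  rw [Submodule.mem_sup] at hrest
  obtain ⟨x', hx', l, hl, hsum⟩ := hrest
  refine ⟨xh, x', l, hxh, hx', ?_, ?_⟩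
  · refine Submodule.mem_inf.mpr ⟨?_, hl⟩
    have hxhM : xh ∈ M' (w + r) := (Submodule.mem_inf.mp hxh).1
    have h1 : (N ^ r) xh ∈ M' (w - r) := by
      have := shift_pow hM'sh r (w + r) xh hxhM
      rwa [show w + (r : ℤ) - 2 * r = w - r by omega] at this
    have h2 : x' ∈ M' (w - r) := hM'mono (by omega) (Submodule.mem_inf.mp hx').1
    have : l = x - (N ^ r) xh - x' := by rw [← hsum]; abel
    rw [this]
    exact Submodule.sub_mem _ (Submodule.sub_mem _ hx h1) h2
  · rw [eq_comm, add_assoc, hsum]; abel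

lemma rmf_le {W : ℤ → Submodule K V} (hW : IsFiniteFiltration W)
    (hNW : ∀ w : ℤ, ∀ x ∈ W w, N x ∈ W w)
    {M M' : ℤ → Submodule K V} (hM : IsRelMonodromy N W M) (hM' : IsRelMonodromy N W M') :
    ∀ k, M' k ≤ M k := by
  obtain ⟨hWmono, ⟨a, ha⟩, ⟨b, hb⟩⟩ := hW
  obtain ⟨⟨hMmono, _, ⟨kt, hkt⟩⟩, hMsh, hMax⟩ := hM
  obtain ⟨⟨hM'mono, ⟨kb, hkb⟩, _⟩, hM'sh, hM'ax⟩ := hM'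
  have hMinj := fun w r => (hMax w r).1
  have hM'surj := fun w r => (hM'ax w r).2
  have hdrop := level_drop hNW ha hMmono hMsh hMinj
  have hsex := sexact hM'mono hM'sh hM'surj
  -- the per-w step
  have step : ∀ w : ℤ, (∀ (k : ℤ) (x : V), x ∈ M' k → x ∈ W (w - 1) → x ∈ M k) →
      (∀ (k : ℤ) (x : V), x ∈ M' k → x ∈ W w → x ∈ M k) := by
    intro w C
    set P : ℕ → Prop := fun n => ∀ (k : ℤ) (x : V), x ∈ M' k → x ∈ W w →
        ((w - 1 + n ≤ k → x ∈ M k) ∧ (k ≤ w - 1 - n → x ∈ M k)) with hP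
    set n₀ : ℕ := (kt - (w - 1)).toNat + ((w - 1) - kb).toNat with hn₀
    have base : P n₀ := by
      intro k x hx _
      constructor
      · intro hk
        have : M k = ⊤ := hkt k (by omega)
        rw [this]; trivial
      · intro hk
        have : M' k = ⊥ := hkb k (by omega)
        rw [this] at hx
        simp only [Submodule.mem_bot] at hx
        subst hx; exact zero_mem _
    have stepP : ∀ n : ℕ, P (n + 1) → P n := by
      intro n hPn
      -- low part first
      have low : ∀ (k : ℤ) (x : V), x ∈ M' k → x ∈ W w → k ≤ w - 1 - n → x ∈ M k := by
        intro k x hx hxW hk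
        set r : ℕ := (w - k).toNat with hr
        have hrz : (r : ℤ) = w - k := Int.toNat_of_nonneg (by omega)
        obtain ⟨xh, x', l, hxh, hx', hl, hsum⟩ :=
          hsex w r x (by rwa [show w - (r : ℤ) = k by omega]) hxW
        obtain ⟨hxhM, hxhW⟩ := Submodule.mem_inf.mp hxh
        obtain ⟨hx'M, hx'W⟩ := Submodule.mem_inf.mp hx'
        obtain ⟨hlM, hlW⟩ := Submodule.mem_inf.mp hl
        rw [hsum]
        apply Submodule.add_mem _ (Submodule.add_mem _ ?_ ?_) ?_
        · -- (N^r) xh ∈ M k : xh at high level w + r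
          have hxhM2 : xh ∈ M (w + r) :=
            (hPn (w + r) xh hxhM hxhW).1 (by omega)
          have := shift_pow hMsh r (w + r) xh hxhM2
          rwa [show w + (r : ℤ) - 2 * r = k by omega] at this
        · -- x' ∈ M (w - r - 1) ⊆ M k... w - r - 1 = k - 1
          have hx'M2 : x' ∈ M (w - r - 1) :=
            (hPn (w - r - 1) x' hx'M hx'W).2 (by omega)
          exact hMmono (by omega) hx'M2
        · -- l via C
          have : l ∈ M (w - r) := C (w - r) l hlM hlW
          exact hMmono (by omega) this
      intro k x hx hxW
      constructor
      · -- high part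
        intro hk
        by_cases hk2 : w - 1 + ((n : ℤ) + 1) ≤ k
        · exact (hPn k x hx hxW).1 (by push_cast; omega)
        · -- k = w - 1 + n
          by_cases hn : n = 0
          · exact low k x hx hxW (by omega)
          -- n ≥ 1, k = w - 1 + n = w + (n - 1)
          have hkeq : k = w - 1 + n := by omega
          have hx1 : x ∈ M (k + 1) :=
            (hPn (k + 1) x (hM'mono (by omega) hx) hxW).1 (by push_cast; omega)
          -- injectivity at (w, n)
          have hmem : x ∈ M (w + (n : ℤ)) ⊓ W w := by
            refine Submodule.mem_inf.mpr ⟨?_, hxW⟩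
            rwa [show w + (n : ℤ) = k + 1 by omega]
          have hprem : (N ^ n) x ∈ (M (w - n - 1) ⊓ W w) ⊔ W (w - 1) := by
            apply Submodule.mem_sup_left
            have h1 : (N ^ n) x ∈ M' (k - 2 * n) := shift_pow hM'sh n k x hx
            have h2 : (N ^ n) x ∈ W w := pow_presW hNW n w x hxW
            have h3 : (N ^ n) x ∈ M (k - 2 * n) := low _ _ h1 h2 (by omega)
            refine Submodule.mem_inf.mpr ⟨?_, h2⟩
            rwa [show (k - 2 * (n : ℤ)) = w - n - 1 by omega] at h3
          have hc := hMinj w n x hmem hprem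
          rw [Submodule.mem_sup] at hc
          obtain ⟨m, hm, h, hh, hsum⟩ := hc
          obtain ⟨hmM, hmW⟩ := Submodule.mem_inf.mp hm
          rw [show w + (n : ℤ) - 1 = k by omega] at hmM
          have hhx : h = x - m := by rw [← hsum]; abel
          have hhM1 : h ∈ M (k + 1) := by
            rw [hhx]
            exact Submodule.sub_mem _ hx1 (hMmono (by omega) hmM)
          have hhk : h ∈ M k := by
            apply hdrop (w - 1) k (by omega) h hh hhM1
            intro s hs
            rw [hhx, map_sub]
            apply Submodule.sub_mem
            · -- (N^s) x : M' level k - 2s, low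
              have h1 : (N ^ s) x ∈ M' (k - 2 * s) := shift_pow hM'sh s k x hx
              have h2 : (N ^ s) x ∈ W w := pow_presW hNW s w x hxW
              exact (hPn (k - 2 * s) _ h1 h2).2 (by push_cast; omega)
            · exact shift_pow hMsh s k m hmM
          rw [← hsum]
          exact Submodule.add_mem _ hmM hhk
      · exact low k x hx hxW
    have alln : ∀ d : ℕ, P (n₀ - d) := by
      intro d
      induction d with
      | zero => simpa using base
      | succ m ih =>
        by_cases hc : m < n₀
        · have h1 := stepP (n₀ - (m + 1))
          rw [show n₀ - (m + 1) + 1 = n₀ - m by omega] at h1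
          exact h1 ih
        · rw [show n₀ - (m + 1) = n₀ - m by omega]
          exact ih
    have P0 := alln n₀
    rw [show n₀ - n₀ = 0 by omega] at P0
    intro k x hx hxW
    rcases le_or_gt (w - 1) k with h | h
    · exact (P0 k x hx hxW).1 (by push_cast; omega)
    · exact (P0 k x hx hxW).2 (by push_cast; omega)
  -- outer induction on w
  have main : ∀ i : ℕ, ∀ (k : ℤ) (x : V), x ∈ M' k → x ∈ W (a + i) → x ∈ M k := by
    intro i
    induction i with
    | zero =>
      intro k x _ hxW
      rw [show a + ((0 : ℕ) : ℤ) = a by omega, ha a le_rfl] at hxW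
      simp only [Submodule.mem_bot] at hxW
      subst hxW; exact zero_mem _
    | succ m ih =>
      have := step (a + (m + 1 : ℕ))
      rw [show (a + ((m + 1 : ℕ) : ℤ) - 1) = a + (m : ℕ) by push_cast; ring] at this
      exact this ih
  intro k x hx
  have hxtop : x ∈ W (a + ((b - a).toNat : ℤ)) := by
    rw [hb _ (by omega)]
    trivial
  exact main (b - a).toNat k x hx hxtop

theorem rmf_unique {W : ℤ → Submodule K V} (hW : IsFiniteFiltration W)
    (hNW : ∀ w : ℤ, ∀ x ∈ W w, N x ∈ W w)
    {M M' : ℤ → Submodule K V} (hM : IsRelMonodromy N W M) (hM' : IsRelMonodromy N W M') :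
    ∀ k, M k = M' k := fun k =>
  le_antisymm (rmf_le hW hNW hM' hM k) (rmf_le hW hNW hM hM' k)

end Unique2


section Transport

variable {K V : Type*} [Field K] [AddCommGroup V] [Module K V]

lemma rmf_transport {N e f : Module.End K V} {W 𝒲 : ℤ → Submodule K V}
    (hef : e * f = 1) (hfe : f * e = 1)
    (heN : e * N = N * e)
    (heW : ∀ u : ℤ, (W u).map e = W u)
    (hfW : ∀ u : ℤ, ∀ x ∈ W u, f x ∈ W u)
    (h𝒲 : IsRelMonodromy N W 𝒲) :
    IsRelMonodromy N W (fun w => (𝒲 w).map e) := by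
  obtain ⟨⟨hmono, ⟨a, ha⟩, ⟨b, hb⟩⟩, hsh, hax⟩ := h𝒲
  have heinj : Function.Injective e := by
    intro x y hxy
    have h1 : (f * e) x = (f * e) y := by simp only [Module.End.mul_apply, hxy]
    rwa [hfe, Module.End.one_apply, Module.End.one_apply] at h1
  have heC : Commute e N := heN
  have hepow : ∀ (r : ℕ) (y : V), (N ^ r) (e y) = e ((N ^ r) y) := by
    intro r y
    have h1 : N ^ r * e = e * N ^ r := ((heC.pow_right r).symm : Commute (N ^ r) e)
    calc (N ^ r) (e y) = (N ^ r * e) y := rfl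
      _ = (e * N ^ r) y := by rw [h1]
      _ = e ((N ^ r) y) := rfl
  have hkey : ∀ (A : Submodule K V) (u u' : ℤ),
      ((A ⊓ W u) ⊔ W u').map e = (A.map e ⊓ W u) ⊔ W u' := by
    intro A u u'
    rw [Submodule.map_sup, Submodule.map_inf e heinj, heW u, heW u']
  refine ⟨⟨?_, ⟨a, ?_⟩, ⟨b, ?_⟩⟩, ?_, ?_⟩
  · exact fun u u' huu => Submodule.map_mono (hmono huu)
  · intro w hw
    simp only []
    rw [ha w hw, Submodule.map_bot]
  · intro w hw
    simp only []
    rw [hb w hw, Submodule.map_top, LinearMap.range_eq_top]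
    intro x
    exact ⟨f x, by rw [← Module.End.mul_apply, hef, Module.End.one_apply]⟩
  · -- shift
    rintro w x hx
    obtain ⟨y, hy, rfl⟩ := Submodule.mem_map.mp hx
    have h1 : N (e y) = e (N y) := by
      have := hepow 1 y
      simpa [pow_one] using this
    rw [h1]
    exact Submodule.mem_map_of_mem (hsh w y hy)
  · intro w r
    constructor
    · -- injectivity clause
      intro x hx hprem
      obtain ⟨hx1, hxW⟩ := Submodule.mem_inf.mp hx
      obtain ⟨y, hy, rfl⟩ := Submodule.mem_map.mp hx1
      have hyW : y ∈ W w := by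
        have h2 := hfW w (e y) hxW
        rwa [show f (e y) = y by rw [← Module.End.mul_apply, hfe, Module.End.one_apply]] at h2
      have hprem2 : (N ^ r) y ∈ (𝒲 (w - r - 1) ⊓ W w) ⊔ W (w - 1) := by
        rw [← hkey] at hprem
        rw [hepow r y] at hprem
        obtain ⟨z, hz, hze⟩ := Submodule.mem_map.mp hprem
        rwa [← heinj hze]
      have hc := (hax w r).1 y (Submodule.mem_inf.mpr ⟨hy, hyW⟩) hprem2
      rw [← hkey]
      exact Submodule.mem_map_of_mem hc
    · -- surjectivity clause
      intro y₀ hy₀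
      obtain ⟨hy₀1, hy₀W⟩ := Submodule.mem_inf.mp hy₀
      obtain ⟨z, hz, rfl⟩ := Submodule.mem_map.mp hy₀1
      have hzW : z ∈ W w := by
        have h2 := hfW w (e z) hy₀W
        rwa [show f (e z) = z by rw [← Module.End.mul_apply, hfe, Module.End.one_apply]] at h2
      obtain ⟨x₀, hx₀, hrest⟩ := (hax w r).2 z (Submodule.mem_inf.mpr ⟨hz, hzW⟩)
      obtain ⟨hx₀1, hx₀W⟩ := Submodule.mem_inf.mp hx₀
      refine ⟨e x₀, Submodule.mem_inf.mpr ⟨Submodule.mem_map_of_mem hx₀1, ?_⟩, ?_⟩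
      · rw [← heW w]
        exact Submodule.mem_map_of_mem hx₀W
      · rw [← hkey]
        have : e z - (N ^ r) (e x₀) = e (z - (N ^ r) x₀) := by
          rw [hepow r x₀, map_sub]
        rw [this]
        exact Submodule.mem_map_of_mem hrest

end Transport


/-- Transport of the relative monodromy filtration under `exp(N')`, for `N'` nilpotent,
commuting with `N` and preserving `W`; in particular `exp(N')` preserves `𝒲`. -/
theorem relative_monodromy_filtration_exp_conjugate
    {K V : Type*} [Field K] [CharZero K] [AddCommGroup V] [Module K V] [FiniteDimensional K V]
    (N : Module.End K V) (hNnil : IsNilpotent N)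
    (W : ℤ → Submodule K V) (hW : IsFiniteFiltration W)
    (hNW : ∀ w : ℤ, ∀ x ∈ W w, N x ∈ W w)
    (𝒲 : ℤ → Submodule K V) (h𝒲 : IsRelMonodromy N W 𝒲)
    (N' : Module.End K V) (hN'nil : IsNilpotent N')
    (hcomm : N' * N = N * N')
    (hN'W : ∀ w : ℤ, ∀ x ∈ W w, N' x ∈ W w) :
    IsRelMonodromy (expNil N' * N * expNil (-N'))
      (fun w => (W w).map (expNil N')) (fun w => (𝒲 w).map (expNil N')) ∧
    (∀ w : ℤ, (𝒲 w).map (expNil N') = 𝒲 w) := by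
  classical
  have hef : expNil N' * expNil (-N') = 1 := expNil_mul_expNil_neg hN'nil
  have hfe : expNil (-N') * expNil N' = 1 := by
    have h1 := expNil_mul_expNil_neg hN'nil.neg
    rwa [neg_neg] at h1
  have heN : expNil N' * N = N * expNil N' := expNil_comm hcomm
  have hconj : expNil N' * N * expNil (-N') = N := by
    rw [heN, mul_assoc, hef, mul_one]
  have heW : ∀ u : ℤ, (W u).map (expNil N') = W u := by
    intro u
    apply le_antisymm
    · rintro x hx
      obtain ⟨y, hy, rfl⟩ := Submodule.mem_map.mp hx
      exact expNil_mem_of_mem (hN'W u) y hy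
    · intro x hx
      refine ⟨expNil (-N') x, ?_, ?_⟩
      · exact expNil_mem_of_mem (fun z hz => by
          simpa using Submodule.neg_mem _ (hN'W u z hz)) x hx
      · rw [← Module.End.mul_apply, hef, Module.End.one_apply]
  have hfW : ∀ u : ℤ, ∀ x ∈ W u, expNil (-N') x ∈ W u := by
    intro u x hx
    exact expNil_mem_of_mem (fun z hz => by
      simpa using Submodule.neg_mem _ (hN'W u z hz)) x hx
  have hM' : IsRelMonodromy N W (fun w => (𝒲 w).map (expNil N')) :=
    rmf_transport hef hfe heN heW hfW h𝒲
  have h2 : ∀ w : ℤ, (𝒲 w).map (expNil N') = 𝒲 w := by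
    intro w
    exact (rmf_unique hW hNW h𝒲 hM' w).symm
  refine ⟨?_, h2⟩
  have hWfun : (fun w => (W w).map (expNil N')) = W := funext heW
  have h𝒲fun : (fun w => (𝒲 w).map (expNil N')) = 𝒲 := funext h2
  rw [hWfun, h𝒲fun, hconj]
  exact h𝒲
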